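/- Let f : ℝⁿ → ℝᵐ with each component f_j differentiable at x*. If x* is a weakly efficient solution of the multi-objective problem min f(x) (i.e., there is no x with f_j(x) < f_j(x*) for all j), then for every direction d ∈ ℝⁿ, max over j of the directional derivative f_j'(x*; d) is nonnegative. -/

import Mathlib

lemma line_deriv {n : ℕ} (f : EuclideanSpace ℝ (Fin n) → ℝ)
    (xs d : EuclideanSpace ℝ (Fin n)) (hf : DifferentiableAt ℝ f xs) :
    HasDerivAt (fun t : ℝ => f (xs + t • d)) (fderiv ℝ f xs d) 0 := by
  have hline : HasDerivAt (fun t : ℝ => xs + t • d) d 0 := by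
    simpa using ((hasDerivAt_id (0:ℝ)).smul_const d).const_add xs
  have hf' : HasFDerivAt f (fderiv ℝ f xs) (xs + (0:ℝ) • d) := by
    simpa using hf.hasFDerivAt
  exact hf'.comp_hasDerivAt 0 hline

/-- If `x*` is weakly efficient for `min (f_1,...,f_m)` and each `f_j` is differentiable
at `x*`, then for every direction `d` some directional derivative `f_j'(x*; d)` is
nonnegative (i.e. the max over `j` is nonnegative). -/
theorem stmt_0 {n m : ℕ} (hm : 0 < m)
    (f : Fin m → EuclideanSpace ℝ (Fin n) → ℝ) (xs : EuclideanSpace ℝ (Fin n))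
    (hdiff : ∀ j, DifferentiableAt ℝ (f j) xs)
    (hweak : ¬ ∃ x, ∀ j, f j x < f j xs) :
    ∀ d : EuclideanSpace ℝ (Fin n), ∃ j, 0 ≤ fderiv ℝ (f j) xs d := by
  intro d
  by_contra h
  push_neg at h
  apply hweak
  have key : ∀ j, ∀ᶠ t in nhdsWithin (0:ℝ) (Set.Ioi 0),
      f j (xs + t • d) < f j xs := by
    intro j
    have hd := line_deriv (f j) xs d (hdiff j)
    have hslope := hd.tendsto_slope_zero_right
    have hlt : ∀ᶠ t in nhdsWithin (0:ℝ) (Set.Ioi 0),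
        t⁻¹ • (f j (xs + t • d) - f j (xs + (0:ℝ) • d)) < 0 := by
      have := hslope (Iio_mem_nhds (h j))
      simp at this
      simp only [zero_smul, add_zero, smul_eq_mul]
      exact this
    filter_upwards [hlt, self_mem_nhdsWithin] with t ht ht0
    have ht0' : (0:ℝ) < t := ht0
    simp only [zero_smul, add_zero, smul_eq_mul] at ht
    have hX : f j (xs + t • d) - f j xs < 0 := by nlinarith [inv_pos.mpr ht0']
    linarith
  have hall := Filter.eventually_all.mpr key
  have hne : (nhdsWithin (0:ℝ) (Set.Ioi 0)).NeBot := by infer_instance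
  obtain ⟨t, ht⟩ := hall.exists
  exact ⟨xs + t • d, ht⟩
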